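/- Let n ≥ k+3 ≥ 4. The k-tuple total restrained domination number of the complement of the cycle C_n equals n if n ≤ 2k+2, equals k+2 if 2k+3 ≤ n ≤ 3k+2, and equals k+1 if n ≥ 3k+3. -/

import Mathlib

open SimpleGraph

/-- `S` is a `k`-tuple total restrained dominating set of `G`: every vertex has at
least `k` neighbors in `S`, and every vertex outside `S` has at least `k` neighbors
outside `S`. -/
def IsKTRDS {V : Type*} (G : SimpleGraph V) (k : ℕ) (S : Set V) : Prop :=
  (∀ v : V, k ≤ (S ∩ G.neighborSet v).ncard) ∧
  (∀ v : V, v ∉ S → k ≤ (Sᶜ ∩ G.neighborSet v).ncard)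

/-- `S` is a `k`-tuple total dominating set of `G`. -/
def IsKTDS {V : Type*} (G : SimpleGraph V) (k : ℕ) (S : Set V) : Prop :=
  ∀ v : V, k ≤ (S ∩ G.neighborSet v).ncard

/-- The `k`-tuple total restrained domination number of `G`. -/
noncomputable def ktrdNum {V : Type*} (G : SimpleGraph V) (k : ℕ) : ℕ :=
  sInf {m | ∃ S : Set V, IsKTRDS G k S ∧ S.ncard = m}

/-- The `k`-tuple total domination number of `G`. -/
noncomputable def ktNum {V : Type*} (G : SimpleGraph V) (k : ℕ) : ℕ :=
  sInf {m | ∃ S : Set V, IsKTDS G k S ∧ S.ncard = m}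

/-- The `k`-tuple total restrained domatic number of `G`. -/
noncomputable def ktrdDomatic {V : Type*} (G : SimpleGraph V) (k : ℕ) : ℕ :=
  sSup {d | ∃ f : Fin d → Set V, (∀ i, IsKTRDS G k (f i)) ∧ ∀ v : V, ∃! i, v ∈ f i}

/-- The `k`-tuple total domatic number of `G`. -/
noncomputable def ktDomatic {V : Type*} (G : SimpleGraph V) (k : ℕ) : ℕ :=
  sSup {d | ∃ f : Fin d → Set V, (∀ i, IsKTDS G k (f i)) ∧ ∀ v : V, ∃! i, v ∈ f i}

section AuxKTRDS
open Set
open Fin.CommRing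
set_option linter.unusedSectionVars false
set_option linter.unusedVariables false
section
variable {n : ℕ} [NeZero n]

lemma myval_add_one (hn : 2 ≤ n) (v : Fin n) :
    (v + 1).val = if v.val + 1 = n then 0 else v.val + 1 := by
  have h : (v + 1).val = (v.val + 1 % n) % n := by simp [Fin.add_def, Fin.val_one']
  rw [Nat.mod_eq_of_lt (show 1 < n by omega)] at h
  have hv := v.isLt
  rw [h]
  split_ifs with h2
  · rw [h2, Nat.mod_self]
  · exact Nat.mod_eq_of_lt (by omega)

lemma myval_sub_one (hn : 2 ≤ n) (v : Fin n) :
    (v - 1).val = if v.val = 0 then n - 1 else v.val - 1 := by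
  have h : (v - 1).val = (n - (1:Fin n).val + v.val) % n := by rw [Fin.sub_def]
  rw [Fin.val_one', Nat.mod_eq_of_lt (show 1 < n by omega)] at h
  have hv := v.isLt
  rw [h]
  split_ifs with h2
  · rw [h2, Nat.add_zero, Nat.mod_eq_of_lt (by omega)]
  · have h3 : n - 1 + v.val = n + (v.val - 1) := by omega
    rw [h3, Nat.add_mod_left, Nat.mod_eq_of_lt (by omega)]

lemma mytwo_ne_zero (hn : 3 ≤ n) : (2 : Fin n) ≠ 0 := by
  have h2 : ((2:ℕ) : Fin n).val = 2 % n := by rw [Fin.val_natCast]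
  intro h
  rw [show ((2:Fin n)) = ((2:ℕ):Fin n) by norm_cast, Fin.ext_iff] at h
  rw [h2, Nat.mod_eq_of_lt (by omega)] at h
  simp at h

lemma myone_ne_zero (hn : 2 ≤ n) : (1 : Fin n) ≠ 0 := by
  intro h
  rw [Fin.ext_iff, Fin.val_one', Nat.mod_eq_of_lt (by omega)] at h
  simp at h

lemma fin_ne_of_val (a b : Fin n) (h : a.val ≠ b.val) : a ≠ b := fun he => h (by rw [he])

lemma tv_distinct (hn : 4 ≤ n) (v : Fin n) :
    v - 1 ≠ v ∧ v - 1 ≠ v + 1 ∧ v ≠ v + 1 := by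
  have h1 := myval_sub_one (by omega : 2 ≤ n) v
  have h2 := myval_add_one (by omega : 2 ≤ n) v
  have hv := v.isLt
  refine ⟨fin_ne_of_val _ _ ?_, fin_ne_of_val _ _ ?_, fin_ne_of_val _ _ ?_⟩ <;>
    · simp only [h1, h2]; split_ifs <;> omega

lemma tv_ncard (hn : 4 ≤ n) (v : Fin n) :
    ({v - 1, v, v + 1} : Set (Fin n)).ncard = 3 := by
  obtain ⟨d1, d2, d3⟩ := tv_distinct hn v
  rw [Set.ncard_insert_of_notMem (by simp [d1, d2]), Set.ncard_pair d3]

lemma nbhd (hn : 4 ≤ n) (v : Fin n) :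
    ((cycleGraph n)ᶜ).neighborSet v = ({v - 1, v, v + 1} : Set (Fin n))ᶜ := by
  have hval1 : (1 : Fin n).val = 1 := by
    rw [Fin.val_one', Nat.mod_eq_of_lt (by omega)]
  ext x
  simp only [mem_neighborSet, compl_adj, cycleGraph_adj', Set.mem_compl_iff,
    Set.mem_insert_iff, Set.mem_singleton_iff]
  have e1 : x = v - 1 ↔ v - x = 1 := by
    constructor
    · rintro rfl; ring
    · intro h; rw [← h]; ring
  have e2 : x = v + 1 ↔ x - v = 1 := by
    constructor
    · rintro rfl; ring
    · intro h; rw [← h]; ring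
  have e3 : ∀ a : Fin n, a = 1 ↔ a.val = 1 := by
    intro a; rw [Fin.ext_iff, hval1]
  rw [e1, e2, e3, e3, show (x = v) ↔ (v = x) from eq_comm]
  tauto

lemma cond_iff (hn : 4 ≤ n) (k : ℕ) (A : Set (Fin n)) (v : Fin n) :
    k ≤ (A ∩ ((cycleGraph n)ᶜ).neighborSet v).ncard ↔
      k + (A ∩ {v - 1, v, v + 1}).ncard ≤ A.ncard := by
  rw [nbhd hn, ← Set.diff_eq, ← Set.diff_self_inter,
    Set.ncard_diff Set.inter_subset_left (Set.toFinite _)]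
  have h := Set.ncard_le_ncard (Set.inter_subset_left (s := A) (t := {v - 1, v, v + 1}))
    (Set.toFinite _)
  omega

lemma mem_T_val (hn : 4 ≤ n) {v x : Fin n} (h : x ∈ ({v - 1, v, v + 1} : Set (Fin n))) :
    (x.val + 1 = v.val ∨ (v.val = 0 ∧ x.val = n - 1)) ∨ x.val = v.val ∨
      (v.val + 1 = x.val ∨ (v.val + 1 = n ∧ x.val = 0)) := by
  have h1 := myval_sub_one (n := n) (by omega)
  have h2 := myval_add_one (n := n) (by omega)
  have hv := v.isLt
  rcases h with rfl | rfl | rfl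
  · rw [h1]; split_ifs <;> omega
  · omega
  · rw [h2]; split_ifs <;> omega
end

section
variable {n : ℕ} [NeZero n]

lemma card_fin' : Nat.card (Fin n) = n := by simp

lemma compl_ncard (S : Set (Fin n)) : Sᶜ.ncard = n - S.ncard := by
  have h := Set.ncard_add_ncard_compl S (Set.toFinite _) (Set.toFinite _)
  rw [card_fin'] at h
  omega

lemma lb1 (hn : 4 ≤ n) {k : ℕ} {S : Set (Fin n)} (hk : 1 ≤ k)
    (h : IsKTRDS (cycleGraph n)ᶜ k S) : k + 1 ≤ S.ncard := by
  have h0 := h.1 ⟨0, by omega⟩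
  have hne : (S ∩ ((cycleGraph n)ᶜ).neighborSet ⟨0, by omega⟩).Nonempty := by
    rw [← Set.ncard_pos (Set.toFinite _)]; omega
  obtain ⟨s, hsS, -⟩ := hne
  have h2 := (cond_iff hn k S s).mp (h.1 s)
  have h3 : 1 ≤ (S ∩ {s - 1, s, s + 1}).ncard := by
    rw [Nat.one_le_iff_ne_zero, Ne, Set.ncard_eq_zero (Set.toFinite _),
      ← Ne, ← Set.nonempty_iff_ne_empty]
    exact ⟨s, hsS, by simp⟩
  omega

lemma lb2 {k : ℕ} {S : Set (Fin n)} {v a b : Fin n} (hn : 4 ≤ n)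
    (h1 : k ≤ (S ∩ ((cycleGraph n)ᶜ).neighborSet v).ncard) (hab : a ≠ b)
    (ha : a ∈ S ∩ ({v - 1, v, v + 1} : Set (Fin n)))
    (hb : b ∈ S ∩ ({v - 1, v, v + 1} : Set (Fin n))) : k + 2 ≤ S.ncard := by
  have h2 := (cond_iff hn k S v).mp h1
  have h3 : 2 ≤ (S ∩ {v - 1, v, v + 1}).ncard := by
    have hsub : ({a, b} : Set (Fin n)) ⊆ S ∩ {v - 1, v, v + 1} := by
      intro x hx; rcases hx with rfl | rfl <;> assumption
    have := Set.ncard_le_ncard hsub (Set.toFinite _)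
    rwa [Set.ncard_pair hab] at this
  omega

lemma lb_mid {k : ℕ} {S : Set (Fin n)} (hk : 1 ≤ k) (h1 : 2 * k + 3 ≤ n)
    (h2 : n ≤ 3 * k + 2) (h : IsKTRDS (cycleGraph n)ᶜ k S) : k + 2 ≤ S.ncard := by
  have hn : 4 ≤ n := by omega
  by_contra hlt
  push_neg at hlt
  have key : ∀ v a b : Fin n, a ∈ S → b ∈ S →
      a ∈ ({v - 1, v, v + 1} : Set (Fin n)) → b ∈ ({v - 1, v, v + 1} : Set (Fin n)) →
      a = b := by
    intro v a b haS hbS haT hbT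
    by_contra hab
    have := lb2 hn (h.1 v) hab ⟨haS, haT⟩ ⟨hbS, hbT⟩
    omega
  have hs1 : ∀ s ∈ S, s + 1 ∉ S := by
    intro s hs hs1
    have := key s s (s + 1) hs hs1 (by simp) (by simp)
    exact absurd this (tv_distinct hn s).2.2
  have hs2 : ∀ s ∈ S, s + 2 ∉ S := by
    intro s hs hs2
    have he := key (s + 1) s (s + 2) hs hs2
      (by left; ring) (by right; right; rw [Set.mem_singleton_iff]; ring)
    have hne : s ≠ s + 2 := by
      intro hc
      exact mytwo_ne_zero (by omega) ((left_eq_add).mp hc)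
    exact hne he
  set f : S × Fin 3 → Fin n := fun p => p.1.1 + ((p.2.val : ℕ) : Fin n) with hf
  have lemcast : ∀ i : Fin 3, ((i.val : ℕ) : Fin n).val = i.val := by
    intro i
    rw [Fin.val_natCast, Nat.mod_eq_of_lt (by have := i.isLt; omega)]
  have main : ∀ (s t : S) (i j : Fin 3), i.val ≤ j.val → f (s, i) = f (t, j) →
      s = t ∧ i = j := by
    rintro ⟨s, hs⟩ ⟨t, ht⟩ i j hij heq
    simp only [hf] at heq
    have hst : s = t + (((j.val - i.val : ℕ)) : Fin n) := by
      rw [Nat.cast_sub hij]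
      linear_combination heq
    have hd : j.val - i.val = 0 ∨ j.val - i.val = 1 ∨ j.val - i.val = 2 := by
      have := j.isLt; omega
    rcases hd with hd | hd | hd
    · rw [hd] at hst
      simp only [Nat.cast_zero, add_zero] at hst
      subst hst
      refine ⟨rfl, ?_⟩
      have hcc : ((i.val : ℕ) : Fin n) = ((j.val : ℕ) : Fin n) := add_left_cancel heq
      have hv : i.val = j.val := by
        rw [Fin.ext_iff, lemcast, lemcast] at hcc; exact hcc
      exact Fin.ext hv
    · exfalso
      rw [hd, Nat.cast_one] at hst
      rw [hst] at hs
      exact hs1 t ht hs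
    · exfalso
      have hcc : ((2 : ℕ) : Fin n) = (2 : Fin n) := by norm_cast
      rw [hd, hcc] at hst
      rw [hst] at hs
      exact hs2 t ht hs
  have hinj : Function.Injective f := by
    rintro ⟨s, i⟩ ⟨t, j⟩ heq
    rcases Nat.le_total i.val j.val with hle | hle
    · obtain ⟨h1', h2'⟩ := main s t i j hle heq
      rw [h1', h2']
    · obtain ⟨h1', h2'⟩ := main t s j i hle heq.symm
      rw [h1', h2']
  have hcard := Nat.card_le_card_of_injective f hinj
  rw [Nat.card_prod, card_fin', Nat.card_coe_set_eq, Nat.card_eq_fintype_card,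
    Fintype.card_fin] at hcard
  have := lb1 hn hk h
  omega
end

section
variable {n : ℕ} [NeZero n]

lemma univ_isKTRDS {k : ℕ} (hn : k + 3 ≤ n) (hk : 1 ≤ k) :
    IsKTRDS (cycleGraph n)ᶜ k (Set.univ : Set (Fin n)) := by
  have hn4 : 4 ≤ n := by omega
  constructor
  · intro v
    rw [cond_iff hn4, Set.univ_inter, tv_ncard hn4, Set.ncard_univ, card_fin']
    omega
  · intro v hv
    exact absurd (Set.mem_univ v) hv

lemma eq_univ_of_isKTRDS {k : ℕ} {S : Set (Fin n)} (hn : k + 3 ≤ n) (hn2 : n ≤ 2 * k + 2)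
    (hk : 1 ≤ k) (h : IsKTRDS (cycleGraph n)ᶜ k S) : S = Set.univ := by
  have hn4 : 4 ≤ n := by omega
  by_contra hne
  obtain ⟨v, hv⟩ := (Set.ne_univ_iff_exists_notMem S).mp hne
  have c1 := h.1 v
  have c2 := h.2 v hv
  set N := ((cycleGraph n)ᶜ).neighborSet v with hN
  have hNcard : N.ncard = n - 3 := by
    rw [hN, nbhd hn4, compl_ncard, tv_ncard hn4]
  have hdisj : Disjoint (S ∩ N) (Sᶜ ∩ N) := by
    rw [Set.disjoint_left]
    rintro x ⟨hx1, -⟩ ⟨hx2, -⟩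
    exact hx2 hx1
  have hsub : (S ∩ N) ∪ (Sᶜ ∩ N) ⊆ N := by
    rintro x (⟨-, hx⟩ | ⟨-, hx⟩) <;> exact hx
  have hcard := Set.ncard_le_ncard hsub (Set.toFinite _)
  rw [Set.ncard_union_eq hdisj (Set.toFinite _) (Set.toFinite _)] at hcard
  omega

lemma exists_hi {k : ℕ} (hk : 1 ≤ k) (h3 : 3 * k + 3 ≤ n) :
    ∃ S : Set (Fin n), IsKTRDS (cycleGraph n)ᶜ k S ∧ S.ncard = k + 1 := by
  have hn4 : 4 ≤ n := by omega
  set f : Fin (k + 1) → Fin n := fun i => ⟨3 * i.val, by have := i.isLt; omega⟩ with hf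
  have hinj : Function.Injective f := by
    intro i j hij
    have h2 : 3 * i.val = 3 * j.val := congrArg Fin.val hij
    exact Fin.ext (by omega)
  have hcard : (Set.range f).ncard = k + 1 := by
    rw [← Nat.card_coe_set_eq, Nat.card_range_of_injective hinj,
      Nat.card_eq_fintype_card, Fintype.card_fin]
  have hmem : ∀ x : Fin n, x ∈ Set.range f ↔ ∃ j : ℕ, j ≤ k ∧ x.val = 3 * j := by
    intro x
    constructor
    · rintro ⟨i, rfl⟩
      exact ⟨i.val, by have := i.isLt; omega, rfl⟩
    · rintro ⟨j, hj, hx⟩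
      refine ⟨⟨j, by omega⟩, Fin.ext ?_⟩
      show 3 * j = x.val
      omega
  refine ⟨Set.range f, ⟨?_, ?_⟩, hcard⟩
  · intro v
    rw [cond_iff hn4, hcard]
    have hle1 : (Set.range f ∩ {v - 1, v, v + 1}).ncard ≤ 1 := by
      rw [Set.ncard_le_one (Set.toFinite _)]
      rintro a ⟨haS, haT⟩ b ⟨hbS, hbT⟩
      obtain ⟨i, hi, hai⟩ := (hmem a).mp haS
      obtain ⟨j, hj, hbj⟩ := (hmem b).mp hbS
      have hTa := mem_T_val hn4 haT
      have hTb := mem_T_val hn4 hbT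
      have hv := v.isLt
      have ha' := a.isLt
      have hb' := b.isLt
      exact Fin.ext (by omega)
    omega
  · intro v hv
    rw [cond_iff hn4, compl_ncard, hcard]
    have hle3 : ((Set.range f)ᶜ ∩ {v - 1, v, v + 1}).ncard ≤ 3 := by
      have := Set.ncard_le_ncard (Set.inter_subset_right (s := (Set.range f)ᶜ)
        (t := {v - 1, v, v + 1})) (Set.toFinite _)
      rw [tv_ncard hn4] at this
      exact this
    omega
end

section
variable {n : ℕ} [NeZero n]

lemma ncard_le_two_of_subset_pair {X : Set (Fin n)} {a b : Fin n} (h : X ⊆ {a, b}) :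
    X.ncard ≤ 2 := by
  have h1 := Set.ncard_le_ncard h (Set.toFinite _)
  have h2 : ({a, b} : Set (Fin n)).ncard ≤ 2 :=
    le_trans (Set.ncard_insert_le _ _) (by simp)
  omega

lemma ncard_le_one_of_subset_singleton {X : Set (Fin n)} {a : Fin n} (h : X ⊆ {a}) :
    X.ncard ≤ 1 := by
  have h1 := Set.ncard_le_ncard h (Set.toFinite _)
  simpa using h1

lemma exists_mid {k : ℕ} (hk : 1 ≤ k) (h1 : 2 * k + 3 ≤ n) (h2 : n ≤ 3 * k + 2) :
    ∃ S : Set (Fin n), IsKTRDS (cycleGraph n)ᶜ k S ∧ S.ncard = k + 2 := by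
  have hn4 : 4 ≤ n := by omega
  set f : Fin (k + 2) → Fin n := fun i =>
    if h : i.val < k then ⟨2 * i.val + 1, by omega⟩
    else ⟨n - 2 + (i.val - k), by have := i.isLt; omega⟩ with hf
  have hval2 : ∀ (a : ℕ) (h : a < k + 2),
      (f ⟨a, h⟩).val = if a < k then 2 * a + 1 else n - 2 + (a - k) := by
    intro a h
    by_cases h' : a < k
    · rw [if_pos h']
      show ((if h : a < k then (⟨2 * a + 1, by omega⟩ : Fin n)
        else ⟨n - 2 + (a - k), by omega⟩) : Fin n).val = 2 * a + 1
      rw [dif_pos h']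
    · rw [if_neg h']
      show ((if h : a < k then (⟨2 * a + 1, by omega⟩ : Fin n)
        else ⟨n - 2 + (a - k), by omega⟩) : Fin n).val = n - 2 + (a - k)
      rw [dif_neg h']
  have hval : ∀ i : Fin (k + 2),
      (f i).val = if i.val < k then 2 * i.val + 1 else n - 2 + (i.val - k) := fun i =>
    hval2 i.val i.isLt
  have hinj : Function.Injective f := by
    intro i j hij
    have hc := congrArg Fin.val hij
    rw [hval, hval] at hc
    have hi := i.isLt
    have hj := j.isLt
    split_ifs at hc <;> exact Fin.ext (by omega)
  have hcard : (Set.range f).ncard = k + 2 := by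
    rw [← Nat.card_coe_set_eq, Nat.card_range_of_injective hinj,
      Nat.card_eq_fintype_card, Fintype.card_fin]
  have hmemP : ∀ x : Fin n, x ∈ Set.range f ↔
      ((x.val % 2 = 1 ∧ x.val < 2 * k) ∨ x.val = n - 2 ∨ x.val = n - 1) := by
    intro x
    constructor
    · rintro ⟨i, rfl⟩
      have hv := hval i
      have hi := i.isLt
      split_ifs at hv <;> rw [hv] <;> omega
    · rintro (⟨hodd, hlt⟩ | hx | hx)
      · refine ⟨⟨x.val / 2, by omega⟩, Fin.ext ?_⟩
        rw [hval2 _ _, if_pos (show x.val / 2 < k by omega)]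
        omega
      · refine ⟨⟨k, by omega⟩, Fin.ext ?_⟩
        rw [hval2 _ _, if_neg (by omega)]
        omega
      · refine ⟨⟨k + 1, by omega⟩, Fin.ext ?_⟩
        rw [hval2 _ _, if_neg (by omega)]
        omega
  refine ⟨Set.range f, ⟨?_, ?_⟩, hcard⟩
  · intro v
    rw [cond_iff hn4, hcard]
    suffices hle : (Set.range f ∩ {v - 1, v, v + 1}).ncard ≤ 2 by omega
    have hclaim : v - 1 ∉ Set.range f ∨ v ∉ Set.range f ∨ v + 1 ∉ Set.range f := by
      by_contra hc
      push_neg at hc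
      obtain ⟨ha, hb, hcc⟩ := hc
      rw [hmemP] at ha hb hcc
      rw [myval_sub_one (by omega) v] at ha
      rw [myval_add_one (by omega) v] at hcc
      have hvlt := v.isLt
      split_ifs at ha hcc <;>
        first
          | omega
          | (rcases hcc with ⟨hF, -⟩ | hF | hF <;> first | exact hF.elim | omega)
    rcases hclaim with hx | hx | hx
    · refine ncard_le_two_of_subset_pair (a := v) (b := v + 1) ?_
      rintro y ⟨hyS, hyT⟩
      rcases hyT with rfl | rfl | rfl
      · exact absurd hyS hx
      · simp
      · simp
    · refine ncard_le_two_of_subset_pair (a := v - 1) (b := v + 1) ?_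
      rintro y ⟨hyS, hyT⟩
      rcases hyT with rfl | rfl | rfl
      · simp
      · exact absurd hyS hx
      · simp
    · refine ncard_le_two_of_subset_pair (a := v - 1) (b := v) ?_
      rintro y ⟨hyS, hyT⟩
      rcases hyT with rfl | rfl | rfl
      · simp
      · simp
      · exact absurd hyS hx
  · intro v hv
    rw [cond_iff hn4, compl_ncard, hcard]
    suffices hle : ((Set.range f)ᶜ ∩ {v - 1, v, v + 1}).ncard ≤ n - 2 * k - 2 by omega
    by_cases hc5 : 2 * k + 5 ≤ n
    · have h3 := Set.ncard_le_ncard (Set.inter_subset_right (s := (Set.range f)ᶜ)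
        (t := {v - 1, v, v + 1})) (Set.toFinite _)
      rw [tv_ncard hn4] at h3
      omega
    · rw [hmemP] at hv
      have hvlt := v.isLt
      by_cases hc4 : n = 2 * k + 4
      · have hnb : v - 1 ∈ Set.range f ∨ v + 1 ∈ Set.range f := by
          rw [hmemP, hmemP, myval_sub_one (by omega) v, myval_add_one (by omega) v]
          split_ifs <;> omega
        have hbd : ((Set.range f)ᶜ ∩ {v - 1, v, v + 1}).ncard ≤ 2 := by
          rcases hnb with hx | hx
          · refine ncard_le_two_of_subset_pair (a := v) (b := v + 1) ?_
            rintro y ⟨hyc, hyT⟩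
            rcases hyT with rfl | rfl | rfl
            · exact absurd hx hyc
            · simp
            · simp
          · refine ncard_le_two_of_subset_pair (a := v - 1) (b := v) ?_
            rintro y ⟨hyc, hyT⟩
            rcases hyT with rfl | rfl | rfl
            · simp
            · simp
            · exact absurd hx hyc
        omega
      · have hc3 : n = 2 * k + 3 := by omega
        have hnb : v - 1 ∈ Set.range f ∧ v + 1 ∈ Set.range f := by
          rw [hmemP, hmemP, myval_sub_one (by omega) v, myval_add_one (by omega) v]
          split_ifs <;> omega
        have hsub : ((Set.range f)ᶜ ∩ {v - 1, v, v + 1}) ⊆ {v} := by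
          rintro y ⟨hyc, hyT⟩
          rcases hyT with rfl | rfl | rfl
          · exact absurd hnb.1 hyc
          · rfl
          · exact absurd hnb.2 hyc
        have := ncard_le_one_of_subset_singleton hsub
        omega
end

end AuxKTRDS
theorem stmt_5 (k n : ℕ) (hk : 1 ≤ k) (hn : k + 3 ≤ n) :
    ktrdNum (SimpleGraph.cycleGraph n)ᶜ k =
      if n ≤ 2 * k + 2 then n else if n ≤ 3 * k + 2 then k + 2 else k + 1 := by
  haveI : NeZero n := ⟨by omega⟩
  have hn4 : 4 ≤ n := by omega
  unfold ktrdNum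
  by_cases hA : n ≤ 2 * k + 2
  · rw [if_pos hA]
    have hset : {m | ∃ S : Set (Fin n), IsKTRDS (cycleGraph n)ᶜ k S ∧ S.ncard = m}
        = {n} := by
      ext m
      simp only [Set.mem_setOf_eq, Set.mem_singleton_iff]
      constructor
      · rintro ⟨S, hS, rfl⟩
        rw [eq_univ_of_isKTRDS hn hA hk hS, Set.ncard_univ, card_fin']
      · rintro rfl
        exact ⟨Set.univ, univ_isKTRDS hn hk, by rw [Set.ncard_univ, card_fin']⟩
    rw [hset, csInf_singleton]
  · push_neg at hA
    by_cases hB : n ≤ 3 * k + 2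
    · rw [if_neg (by omega), if_pos hB]
      apply le_antisymm
      · obtain ⟨S, hS, hc⟩ := exists_mid hk (by omega) hB
        exact Nat.sInf_le ⟨S, hS, hc⟩
      · refine le_csInf ⟨k + 2, ?_⟩ ?_
        · obtain ⟨S, hS, hc⟩ := exists_mid hk (by omega) hB
          exact ⟨S, hS, hc⟩
        rintro m ⟨S, hS, rfl⟩
        exact lb_mid hk (by omega) hB hS
    · push_neg at hB
      rw [if_neg (by omega), if_neg (by omega)]
      apply le_antisymm
      · obtain ⟨S, hS, hc⟩ := exists_hi (n := n) hk (by omega)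
        exact Nat.sInf_le ⟨S, hS, hc⟩
      · refine le_csInf ⟨k + 1, ?_⟩ ?_
        · obtain ⟨S, hS, hc⟩ := exists_hi (n := n) hk (by omega)
          exact ⟨S, hS, hc⟩
        rintro m ⟨S, hS, rfl⟩
        exact lb1 hn4 hk hS
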